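/- Let δ and E' be real numbers with 0 < δ < 1/3 and E' > 0. Then there exists a real constant C = C(E', δ) > 0 such that the following holds: for every finite group G and every positive integer k such that G is generated by some set of at most k elements, if for every integer N ≥ 2 the number of maximal proper subgroups of G of index N is at most N^(E'·k), then there exists a finite nonempty multiset A of elements of G with |A| ≤ C·k such that A has detection probability at least δ in G. -/

import Mathlib

open scoped Classical

/-- `A` has detection probability at least `δ` in `G`. -/
def Detects {G : Type*} [Group G] (A : Multiset G) (δ : ℝ) : Prop :=
  ∀ H : Subgroup G, H ≠ ⊤ →
    ((A.filter (fun a => a ∈ H)).card : ℝ) ≤ (1 - δ) * (Multiset.card A : ℝ)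

open Finset

private theorem polykey17 (u : ℝ) (h1 : 1 ≤ u) (h2 : 2 ≤ u^10) : u^10 + u^5 - 1 ≤ u^13 := by
  have hu0 : (0:ℝ) < u := by linarith
  rcases le_or_gt u 1.15 with hu | hu
  · have hq : u^4 + u^3 - u^2 - u - 1 ≤ 0 := by
      nlinarith [mul_nonneg (sub_nonneg.2 h1) (sub_nonneg.2 hu), sq_nonneg (u - 1), sq_nonneg u,
        mul_nonneg (mul_nonneg (sub_nonneg.2 h1) (sub_nonneg.2 hu)) (sq_nonneg u)]
    have h3 : (0:ℝ) ≤ u^3 - 1 := by nlinarith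
    have hA : 2 * (u^3 - 1) ≤ u^10 * (u^3 - 1) := by nlinarith
    have hB : u^5 - 1 ≤ 2 * (u^3 - 1) := by
      nlinarith [mul_nonpos_of_nonneg_of_nonpos (sub_nonneg.2 h1) hq]
    nlinarith
  · set a := u^5 with ha
    have ha1 : (1:ℝ) ≤ a := one_le_pow₀ h1
    have hu3 : (1.52:ℝ) ≤ u^3 := by
      nlinarith [pow_le_pow_left₀ (by norm_num : (0:ℝ) ≤ 1.15) hu.le 3]
    have key : a^2 + a - 1 ≤ a^2 * u^3 := by nlinarith [sq_nonneg (a - 1), sq_nonneg a]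
    calc u^10 + u^5 - 1 = a^2 + a - 1 := by ring
      _ ≤ a^2 * u^3 := key
      _ = u^13 := by ring

private theorem ratekey17 (x : ℝ) (hx : 2 ≤ x) :
    x ^ (-(1/3) : ℝ) * (1 - 1/x + x ^ (-(1/2) : ℝ)) ≤ x ^ (-(1/30) : ℝ) := by
  have hx0 : (0:ℝ) < x := by linarith
  set u : ℝ := x ^ ((1:ℝ)/10) with hu
  have hu0 : 0 < u := Real.rpow_pos_of_pos hx0 _
  have hupow : ∀ n : ℕ, u ^ n = x ^ ((n : ℝ)/10) := by
    intro n
    rw [hu, ← Real.rpow_natCast (x ^ ((1:ℝ)/10)) n, ← Real.rpow_mul hx0.le]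
    ring_nf
  have hx10 : u ^ 10 = x := by rw [hupow]; norm_num
  have h1 : 1 ≤ u := Real.one_le_rpow (by linarith) (by norm_num)
  have h2 : 2 ≤ u ^ 10 := by rw [hx10]; exact hx
  have hp := polykey17 u h1 h2
  have hmain : 1 - 1/x + x ^ (-(1/2) : ℝ) ≤ x ^ ((3:ℝ)/10) := by
    have e1 : (1:ℝ)/x = (u^10)⁻¹ := by rw [hx10, one_div]
    have e2 : x ^ (-(1/2) : ℝ) = (u^5)⁻¹ := by
      rw [hupow 5, ← Real.rpow_neg hx0.le]; norm_num
    have e3 : x ^ ((3:ℝ)/10) = u^3 := by rw [hupow 3]; norm_num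
    rw [e1, e2, e3, ← mul_le_mul_iff_left₀ (show (0:ℝ) < u^10 by positivity)]
    have e4 : (1 - (u ^ 10)⁻¹ + (u ^ 5)⁻¹) * u ^ 10 = u^10 - 1 + u^5 := by
      field_simp
    rw [e4]
    nlinarith [hp]
  calc x ^ (-(1/3) : ℝ) * (1 - 1/x + x ^ (-(1/2) : ℝ))
      ≤ x ^ (-(1/3) : ℝ) * x ^ ((3:ℝ)/10) :=
        mul_le_mul_of_nonneg_left hmain (Real.rpow_nonneg hx0.le _)
    _ = x ^ (-(1/30) : ℝ) := by rw [← Real.rpow_add hx0]; norm_num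

private theorem bad_count17 {G : Type*} [Group G] [Fintype G] (H : Subgroup G) (m T : ℕ)
    (lam : ℝ) (hlam : 1 ≤ lam) :
    ((univ.filter fun a : Fin m → G => T ≤ (univ.filter fun i => a i ∈ H).card).card : ℝ) * lam ^ T
      ≤ (lam * (Nat.card H : ℝ) + ((Fintype.card G : ℝ) - (Nat.card H : ℝ))) ^ m := by
  set f : G → ℝ := fun g => if g ∈ H then lam else 1 with hf
  have hf0 : ∀ g, 0 ≤ f g := by
    intro g; simp only [hf]; split <;> linarith
  have hprod : ∀ a : Fin m → G,
      ∏ i, f (a i) = lam ^ (univ.filter fun i => a i ∈ H).card := by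
    intro a
    simp only [hf]
    rw [Finset.prod_ite, Finset.prod_const, Finset.prod_const, one_pow, mul_one]
  have hcardH : ((univ.filter fun g : G => g ∈ H).card : ℕ) = Nat.card H := by
    rw [Nat.card_eq_fintype_card, Fintype.card_subtype]
  have hsum : ∑ g : G, f g
      = lam * (Nat.card H : ℝ) + ((Fintype.card G : ℝ) - (Nat.card H : ℝ)) := by
    simp only [hf]
    rw [Finset.sum_ite, Finset.sum_const, Finset.sum_const, nsmul_eq_mul, nsmul_eq_mul, mul_one]
    have h2 : (univ.filter fun g : G => ¬ g ∈ H).card = Fintype.card G - Nat.card H := by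
      have h3 := Finset.card_filter_add_card_filter_not (s := (univ : Finset G))
        (p := fun g : G => g ∈ H)
      simp only [Finset.card_univ] at h3
      omega
    rw [hcardH, h2, mul_comm]
    have hle : Nat.card H ≤ Fintype.card G := by
      rw [← hcardH]; exact Finset.card_filter_le _ _
    push_cast [Nat.cast_sub hle]
    ring
  calc ((univ.filter fun a : Fin m → G =>
          T ≤ (univ.filter fun i => a i ∈ H).card).card : ℝ) * lam ^ T
      = ∑ _a ∈ univ.filter fun a : Fin m → G =>
          T ≤ (univ.filter fun i => a i ∈ H).card, lam ^ T := by
        rw [Finset.sum_const, nsmul_eq_mul]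
    _ ≤ ∑ a ∈ univ.filter fun a : Fin m → G => T ≤ (univ.filter fun i => a i ∈ H).card,
          ∏ i, f (a i) := by
        refine Finset.sum_le_sum fun a ha => ?_
        rw [hprod a]
        exact pow_le_pow_right₀ hlam (Finset.mem_filter.1 ha).2
    _ ≤ ∑ a : Fin m → G, ∏ i, f (a i) := by
        refine Finset.sum_le_sum_of_subset_of_nonneg (Finset.filter_subset _ _) ?_
        intro a _ _
        exact Finset.prod_nonneg fun i _ => hf0 _
    _ = (∑ g : G, f g) ^ m := by
        rw [← Fintype.piFinset_univ, ← Finset.prod_univ_sum (fun _ => univ) fun _ g => f g]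
        simp [Finset.prod_const]
    _ = _ := by rw [hsum]

private theorem sum_inv_sq17 (M : ℕ) : ∑ N ∈ Finset.Icc 2 M, (1:ℝ)/(N^2) ≤ 1 := by
  have key : ∀ M : ℕ, 1 ≤ M → ∑ N ∈ Finset.Icc 2 M, (1:ℝ)/(N^2) ≤ 1 - 1/M := by
    intro M hM
    induction M with
    | zero => omega
    | succ M ih =>
      rcases Nat.lt_or_ge M 1 with h1 | h1
      · interval_cases M
        · simp
      · have hM1 : (1:ℝ) ≤ (M:ℝ) := by exact_mod_cast h1
        rw [Finset.sum_Icc_succ_top (by omega)]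
        have h2 : (0:ℝ) < M := by linarith
        have h3 : (0:ℝ) < (M:ℝ) + 1 := by linarith
        have h5 : (1:ℝ)/((M+1:ℕ):ℝ)^2 ≤ 1/(M:ℝ) - 1/((M:ℝ)+1) := by
          push_cast
          rw [div_sub_div _ _ (ne_of_gt h2) (ne_of_gt h3),
            div_le_div_iff₀ (by positivity) (by positivity)]
          ring_nf
          nlinarith
        have h4 := ih h1
        push_cast
        push_cast at h4 h5
        linarith
  rcases Nat.lt_or_ge M 1 with h | h
  · interval_cases M; simp
  · have hM0 : (0:ℝ) < M := by exact_mod_cast h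
    have h1M : (0:ℝ) ≤ 1/(M:ℝ) := by positivity
    linarith [key M h]

set_option maxHeartbeats 2000000 in
theorem stmt17 (δ E' : ℝ) (hδ0 : 0 < δ) (hδ : δ < 1 / 3) (hE' : 0 < E') :
    ∃ C : ℝ, 0 < C ∧
      ∀ (G : Type*) [Group G] [Finite G] (k : ℕ), 0 < k →
        (∃ S : Finset G, S.card ≤ k ∧ Subgroup.closure (S : Set G) = ⊤) →
        (∀ N : ℕ, 2 ≤ N →
          (Nat.card {H : Subgroup G // IsCoatom H ∧ H.index = N} : ℝ) ≤
            (N : ℝ) ^ (E' * (k : ℝ))) →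
        ∃ A : Multiset G, A ≠ 0 ∧ (Multiset.card A : ℝ) ≤ C * k ∧ Detects A δ := by
  refine ⟨30 * E' + 91, by positivity, ?_⟩
  intro G _ _ k hk _hgen hcount
  letI : Fintype G := Fintype.ofFinite G
  letI : Fintype (Subgroup G) := Fintype.ofFinite _
  set g : ℕ := Fintype.card G with hg
  have hg1 : 1 ≤ g := Fintype.card_pos
  have hgR : (1:ℝ) ≤ g := by exact_mod_cast hg1
  have hk1 : (1:ℝ) ≤ (k:ℝ) := by exact_mod_cast hk
  set m : ℕ := ⌈(30 * E' * k : ℝ)⌉₊ + 90 * k with hmdef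
  have hm0 : 0 < m := by
    have : 0 < 90 * k := by omega
    omega
  have hmR0 : (0:ℝ) ≤ (m:ℝ) := Nat.cast_nonneg m
  have hm30 : 30 * (E' * k + 3) ≤ (m:ℝ) := by
    have h1 := Nat.le_ceil (30 * E' * (k:ℝ))
    have : (m:ℝ) = (⌈(30 * E' * k : ℝ)⌉₊ : ℝ) + 90 * k := by push_cast [hmdef]; ring
    rw [this]
    nlinarith
  have hmle : (m:ℝ) ≤ (30 * E' + 91) * k := by
    have h2 := Nat.ceil_lt_add_one (show (0:ℝ) ≤ 30 * E' * k by positivity)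
    have : (m:ℝ) = (⌈(30 * E' * k : ℝ)⌉₊ : ℝ) + 90 * k := by push_cast [hmdef]; ring
    rw [this]
    nlinarith
  set T : ℕ := ⌈((1 - δ) * m : ℝ)⌉₊ with hTdef
  have hδ23 : (2:ℝ)/3 ≤ 1 - δ := by linarith
  have hTge : (2:ℝ)/3 * m ≤ (T:ℝ) :=
    le_trans (by nlinarith) (Nat.le_ceil _)
  have hTlt : (T:ℝ) < (1 - δ) * m + 1 :=
    Nat.ceil_lt_add_one (by nlinarith)
  -- bad sets
  set Bad : Subgroup G → Finset (Fin m → G) :=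
    fun H => univ.filter fun a => T ≤ (univ.filter fun i => a i ∈ H).card with hBadDef
  set coat : Finset (Subgroup G) := univ.filter IsCoatom with hcoat
  -- facts about coatom indices
  have hidx : ∀ H : Subgroup G, IsCoatom H → 2 ≤ H.index ∧ H.index ≤ g := by
    intro H hH
    have h0 : H.index ≠ 0 := Subgroup.index_ne_zero_of_finite
    have h1 : H.index ≠ 1 := by
      simpa [Subgroup.index_eq_one] using hH.1
    have hdvd : H.index ∣ g := by
      have := Subgroup.index_dvd_card (H := H)
      rwa [Nat.card_eq_fintype_card] at this
    exact ⟨by omega, Nat.le_of_dvd (by omega) hdvd⟩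
  -- per-coatom bound
  have hper : ∀ H ∈ coat,
      ((Bad H).card : ℝ) ≤ (g:ℝ)^m * ((H.index : ℝ)) ^ (-(m:ℝ)/30) := by
    intro H hH
    have hHc : IsCoatom H := (Finset.mem_filter.1 hH).2
    obtain ⟨hN2, hNg⟩ := hidx H hHc
    set N : ℕ := H.index with hNdef
    have hN2R : (2:ℝ) ≤ (N:ℝ) := by exact_mod_cast hN2
    have hN0 : (0:ℝ) < (N:ℝ) := by linarith
    have hN1R : (1:ℝ) ≤ (N:ℝ) := by linarith
    set lam : ℝ := (N:ℝ) ^ ((1:ℝ)/2) with hlamdef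
    have hlam1 : 1 ≤ lam := Real.one_le_rpow hN1R (by norm_num)
    have hbc := bad_count17 H m T lam hlam1
    -- rewrite the RHS of hbc
    have hNh : (N:ℝ) * (Nat.card H : ℝ) = (g:ℝ) := by
      have := Subgroup.index_mul_card (H := H)
      rw [Nat.card_eq_fintype_card (α := G)] at this
      exact_mod_cast this
    have hh : (Nat.card H : ℝ) = (g:ℝ) / (N:ℝ) := by
      rw [eq_div_iff hN0.ne']
      linear_combination hNh
    have hlamN : lam / (N:ℝ) = (N:ℝ) ^ (-(1/2) : ℝ) := by
      rw [hlamdef, div_eq_mul_inv, ← Real.rpow_neg_one (N:ℝ), ← Real.rpow_add hN0]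
      norm_num
    set r : ℝ := 1 - 1/(N:ℝ) + (N:ℝ) ^ (-(1/2) : ℝ) with hrdef
    have hr0 : 0 ≤ r := by
      rw [hrdef]
      have : (0:ℝ) ≤ (N:ℝ) ^ (-(1/2) : ℝ) := Real.rpow_nonneg hN0.le _
      have h1N : 1/(N:ℝ) ≤ 1/2 := by
        rw [div_le_div_iff₀ hN0 (by norm_num)]; linarith
      linarith
    have hrhs : lam * (Nat.card H : ℝ) + ((g : ℝ) - (Nat.card H : ℝ)) = (g:ℝ) * r := by
      rw [hh, hrdef, ← hlamN]
      field_simp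
      ring
    rw [hrhs] at hbc
    -- lam ^ T ≥ N ^ (m/3)
    have hlampow : (N:ℝ) ^ ((m:ℝ)/3) ≤ lam ^ T := by
      have e : lam ^ T = (N:ℝ) ^ ((1:ℝ)/2 * T) := by
        rw [hlamdef, ← Real.rpow_natCast ((N:ℝ) ^ ((1:ℝ)/2)) T, ← Real.rpow_mul hN0.le]
      rw [e]
      exact Real.rpow_le_rpow_of_exponent_le hN1R (by nlinarith)
    have hbadnn : (0:ℝ) ≤ ((Bad H).card : ℝ) := Nat.cast_nonneg _
    have h1 : ((Bad H).card : ℝ) * (N:ℝ) ^ ((m:ℝ)/3) ≤ ((g:ℝ) * r) ^ m :=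
      le_trans (mul_le_mul_of_nonneg_left hlampow hbadnn) hbc
    -- r ≤ N ^ (3/10)
    have hrle : r ≤ (N:ℝ) ^ ((3:ℝ)/10) := by
      have h0 := ratekey17 (N:ℝ) hN2R
      calc r = (N:ℝ) ^ ((1:ℝ)/3) * ((N:ℝ) ^ (-(1/3) : ℝ) * r) := by
            rw [← mul_assoc, ← Real.rpow_add hN0]
            norm_num
        _ ≤ (N:ℝ) ^ ((1:ℝ)/3) * (N:ℝ) ^ (-(1/30) : ℝ) :=
            mul_le_mul_of_nonneg_left h0 (Real.rpow_nonneg hN0.le _)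
        _ = (N:ℝ) ^ ((3:ℝ)/10) := by
            rw [← Real.rpow_add hN0]; norm_num
    have h2 : ((g:ℝ) * r) ^ m ≤ (g:ℝ)^m * (N:ℝ) ^ ((3:ℝ)/10 * m) := by
      rw [mul_pow]
      have : r ^ m ≤ ((N:ℝ) ^ ((3:ℝ)/10)) ^ m := pow_le_pow_left₀ hr0 hrle m
      have e : ((N:ℝ) ^ ((3:ℝ)/10)) ^ m = (N:ℝ) ^ ((3:ℝ)/10 * m) := by
        rw [← Real.rpow_natCast ((N:ℝ) ^ ((3:ℝ)/10)) m, ← Real.rpow_mul hN0.le]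
      rw [← e]
      exact mul_le_mul_of_nonneg_left this (by positivity)
    rw [← mul_le_mul_iff_left₀ (show (0:ℝ) < (N:ℝ) ^ ((m:ℝ)/3) from Real.rpow_pos_of_pos hN0 _)]
    calc ((Bad H).card : ℝ) * (N:ℝ) ^ ((m:ℝ)/3) ≤ ((g:ℝ) * r) ^ m := h1
      _ ≤ (g:ℝ)^m * (N:ℝ) ^ ((3:ℝ)/10 * m) := h2
      _ = (g:ℝ)^m * (N:ℝ) ^ (-(m:ℝ)/30) * (N:ℝ) ^ ((m:ℝ)/3) := by
          rw [mul_assoc, ← Real.rpow_add hN0]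
          congr 2
          ring
  -- union bound
  have hbiU : ((coat.biUnion Bad).card : ℝ) < (g:ℝ)^m := by
    have hc1 : ((coat.biUnion Bad).card : ℝ) ≤ ∑ H ∈ coat, ((Bad H).card : ℝ) := by
      exact_mod_cast Finset.card_biUnion_le
    set w : ℕ → ℝ := fun N => (g:ℝ)^m * ((N : ℝ)) ^ (-(m:ℝ)/30) with hw
    have hc2 : ∑ H ∈ coat, ((Bad H).card : ℝ) ≤ ∑ H ∈ coat, w H.index := by
      refine Finset.sum_le_sum fun H hH => ?_
      exact hper H hH
    have hc3 : ∑ H ∈ coat, w H.index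
        = ∑ N ∈ coat.image Subgroup.index,
            ((coat.filter fun H => H.index = N).card) • w N :=
      Finset.sum_comp w Subgroup.index
    have hmem : ∀ N ∈ coat.image Subgroup.index, 2 ≤ N ∧ N ≤ g := by
      intro N hN
      obtain ⟨H, hH, rfl⟩ := Finset.mem_image.1 hN
      exact hidx H (Finset.mem_filter.1 hH).2
    have hc4 : ∑ N ∈ coat.image Subgroup.index,
          ((coat.filter fun H => H.index = N).card) • w N
        ≤ ∑ N ∈ coat.image Subgroup.index, (1/2) * (g:ℝ)^m * (1/(N:ℝ)^2) := by
      refine Finset.sum_le_sum fun N hN => ?_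
      obtain ⟨hN2, hNg⟩ := hmem N hN
      have hN2R : (2:ℝ) ≤ (N:ℝ) := by exact_mod_cast hN2
      have hN0 : (0:ℝ) < (N:ℝ) := by linarith
      have hN1R : (1:ℝ) ≤ (N:ℝ) := by linarith
      have hfib : ((coat.filter fun H => H.index = N).card : ℝ)
          ≤ (N:ℝ) ^ (E' * (k:ℝ)) := by
        have e : (coat.filter fun H => H.index = N).card
            = Nat.card {H : Subgroup G // IsCoatom H ∧ H.index = N} := by
          rw [Nat.card_eq_fintype_card, Fintype.card_subtype, hcoat, Finset.filter_filter]
        rw [e]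
        exact hcount N hN2
      rw [nsmul_eq_mul, hw]
      have hwnn : (0:ℝ) ≤ (g:ℝ)^m := by positivity
      calc ((coat.filter fun H => H.index = N).card : ℝ)
            * ((g:ℝ)^m * ((N : ℝ)) ^ (-(m:ℝ)/30))
          ≤ (N:ℝ) ^ (E' * (k:ℝ)) * ((g:ℝ)^m * ((N : ℝ)) ^ (-(m:ℝ)/30)) := by
            refine mul_le_mul_of_nonneg_right hfib ?_
            positivity
        _ = (g:ℝ)^m * ((N:ℝ) ^ (E' * (k:ℝ)) * ((N : ℝ)) ^ (-(m:ℝ)/30)) := by ring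
        _ = (g:ℝ)^m * (N:ℝ) ^ (E' * (k:ℝ) + -(m:ℝ)/30) := by
            rw [← Real.rpow_add hN0]
        _ ≤ (g:ℝ)^m * (N:ℝ) ^ (-(3:ℝ)) := by
            refine mul_le_mul_of_nonneg_left ?_ hwnn
            refine Real.rpow_le_rpow_of_exponent_le hN1R ?_
            nlinarith
        _ ≤ (1/2) * (g:ℝ)^m * (1/(N:ℝ)^2) := by
            rw [Real.rpow_neg hN0.le, show ((3:ℝ)) = ((3:ℕ):ℝ) by norm_num,
              Real.rpow_natCast]
            rw [mul_comm ((1:ℝ)/2) ((g:ℝ)^m), mul_assoc]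
            refine mul_le_mul_of_nonneg_left ?_ hwnn
            have hN2cube : (2:ℝ) * (N:ℝ)^2 ≤ (N:ℝ)^3 := by nlinarith
            calc ((N:ℝ)^3)⁻¹ ≤ ((2:ℝ)*(N:ℝ)^2)⁻¹ := by
                  apply inv_anti₀ (by positivity) hN2cube
              _ = 1/2 * (1/(N:ℝ)^2) := by
                  rw [mul_inv, one_div, one_div]
        _ = (1/2) * (g:ℝ)^m * (1/(N:ℝ)^2) := rfl
    have hc5 : ∑ N ∈ coat.image Subgroup.index, (1/2) * (g:ℝ)^m * (1/(N:ℝ)^2)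
        ≤ ∑ N ∈ Finset.Icc 2 g, (1/2) * (g:ℝ)^m * (1/(N:ℝ)^2) := by
      refine Finset.sum_le_sum_of_subset_of_nonneg ?_ ?_
      · intro N hN
        obtain ⟨h2, hg'⟩ := hmem N hN
        exact Finset.mem_Icc.2 ⟨h2, hg'⟩
      · intro N _ _
        positivity
    have hc6 : ∑ N ∈ Finset.Icc 2 g, (1/2) * (g:ℝ)^m * (1/(N:ℝ)^2)
        ≤ (1/2) * (g:ℝ)^m := by
      rw [← Finset.mul_sum]
      calc (1/2) * (g:ℝ)^m * ∑ N ∈ Finset.Icc 2 g, (1/(N:ℝ)^2)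
          ≤ (1/2) * (g:ℝ)^m * 1 := by
            refine mul_le_mul_of_nonneg_left (by exact_mod_cast sum_inv_sq17 g) (by positivity)
        _ = (1/2) * (g:ℝ)^m := by ring
    have hgm : (0:ℝ) < (g:ℝ)^m := by positivity
    linarith
  -- extract a good tuple
  have hcu : ((univ : Finset (Fin m → G)).card : ℝ) = (g:ℝ)^m := by
    rw [Finset.card_univ]
    rw [show Fintype.card (Fin m → G) = g ^ m by simp [Fintype.card_fun, hg]]
    push_cast
    ring
  have hne : coat.biUnion Bad ≠ univ := by
    intro h
    rw [← h] at hcu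
    exact absurd hcu (ne_of_lt hbiU)
  obtain ⟨a, _, ha⟩ := Finset.exists_of_ssubset (Finset.ssubset_univ_iff.2 hne)
  have hgood : ∀ H : Subgroup G, IsCoatom H →
      (univ.filter fun i => a i ∈ H).card < T := by
    intro H hH
    by_contra hcon
    push_neg at hcon
    exact ha (Finset.mem_biUnion.2 ⟨H, Finset.mem_filter.2 ⟨Finset.mem_univ _, hH⟩,
      Finset.mem_filter.2 ⟨Finset.mem_univ _, hcon⟩⟩)
  -- build the multiset
  refine ⟨Multiset.map a Finset.univ.val, ?_, ?_, ?_⟩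
  · intro h0
    have : Multiset.card (Multiset.map a Finset.univ.val) = m := by
      rw [Multiset.card_map]
      exact Finset.card_univ.trans (Fintype.card_fin m)
    rw [h0] at this
    simp at this
    omega
  · have hcA : Multiset.card (Multiset.map a Finset.univ.val) = m := by
      rw [Multiset.card_map]
      exact Finset.card_univ.trans (Fintype.card_fin m)
    rw [hcA]
    exact hmle
  · intro H' hH'
    rcases eq_top_or_exists_le_coatom H' with h | ⟨H, hH, hle⟩
    · exact absurd h hH'
    have hcA : Multiset.card (Multiset.map a Finset.univ.val) = m := by
      rw [Multiset.card_map]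
      exact Finset.card_univ.trans (Fintype.card_fin m)
    have hmono : ((Multiset.map a Finset.univ.val).filter (fun x => x ∈ H')).card
        ≤ ((Multiset.map a Finset.univ.val).filter (fun x => x ∈ H)).card := by
      refine Multiset.card_le_card (Multiset.monotone_filter_right _ ?_)
      intro x hx
      exact hle hx
    have hceq : ((Multiset.map a Finset.univ.val).filter (fun x => x ∈ H)).card
        = (univ.filter fun i => a i ∈ H).card := by
      rw [← Multiset.countP_eq_card_filter, Multiset.countP_map]
      rfl
    have hlt := hgood H hH
    rw [hcA]
    have h1 : ((Multiset.map a Finset.univ.val).filter (fun x => x ∈ H')).card < T := by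
      omega
    have h2 : (((Multiset.map a Finset.univ.val).filter (fun x => x ∈ H')).card : ℝ)
        ≤ (T:ℝ) - 1 := by
      have : ((Multiset.map a Finset.univ.val).filter (fun x => x ∈ H')).card + 1 ≤ T := h1
      have := (Nat.cast_le (α := ℝ)).2 this
      push_cast at this
      linarith
    linarith
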